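/- For every permutation pattern π of length k there exists a constant c_k such that the number of (n,m)-elections avoiding any fixed set of configurations Γ containing at least one (2,k)-configuration is at most m! · c_k^{(n-1)m}. More precisely, a(n,m,Γ) ≤ m! · S_m(π)^{n-1} where π is the permutation associated to the (2,k)-configuration, and S_m(π) ≤ c_k^m by the Marcus–Tardos theorem. -/

import Mathlib

structure Election where
  nvoters : ℕ
  ncands : ℕ
  votes : Fin nvoters → Equiv.Perm (Fin ncands)

def ElectionContains (E F : Election) : Prop :=
  ∃ f : Fin F.nvoters → Fin E.nvoters, ∃ g : Fin F.ncands → Fin E.ncands,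
    Function.Injective f ∧ Function.Injective g ∧
    ∀ (i : Fin F.nvoters) (x y : Fin F.ncands),
      F.votes i x < F.votes i y → E.votes (f i) (g x) < E.votes (f i) (g y)

def PatternContains {m k : ℕ} (τ : Equiv.Perm (Fin m)) (π : Equiv.Perm (Fin k)) : Prop :=
  ∃ μ ρ : Fin k → Fin m, StrictMono μ ∧ StrictMono ρ ∧ ∀ j, τ (ρ j) = μ (π j)

/-- `S_m(π)`: the number of `m`-permutations avoiding the pattern `π`. -/
noncomputable def Sm (m : ℕ) {k : ℕ} (π : Equiv.Perm (Fin k)) : ℕ :=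
  {σ : Equiv.Perm (Fin m) | ¬ PatternContains σ π}.ncard

theorem Equiv.Perm.apply_inv_self {α : Type*} (f : Equiv.Perm α) (x : α) : f (f⁻¹ x) = x :=
  f.apply_symm_apply x

theorem Equiv.Perm.inv_apply_self {α : Type*} (f : Equiv.Perm α) (x : α) : f⁻¹ (f x) = x :=
  f.symm_apply_apply x

namespace MTSW
open Finset
open Finset
namespace MT

def MContains {k : ℕ} (π : Equiv.Perm (Fin k)) (M : Finset (ℕ × ℕ)) : Prop :=
  ∃ r c : Fin k → ℕ, StrictMono r ∧ StrictMono c ∧ ∀ i, (r i, c (π i)) ∈ M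

def contract (d : ℕ) (M : Finset (ℕ × ℕ)) : Finset (ℕ × ℕ) :=
  M.image (fun p => (p.1 / d, p.2 / d))

lemma contract_contains {k : ℕ} {π : Equiv.Perm (Fin k)} {M : Finset (ℕ × ℕ)} {d : ℕ}
    (h : MContains π (contract d M)) : MContains π M := by
  obtain ⟨r, c, hr, hc, hm⟩ := h
  have hch : ∀ i : Fin k, ∃ p : ℕ × ℕ, p ∈ M ∧ p.1 / d = r i ∧ p.2 / d = c (π i) := by
    intro i
    have := hm i
    simp only [contract, mem_image] at this
    obtain ⟨p, hp, he⟩ := this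
    exact ⟨p, hp, congrArg Prod.fst he, congrArg Prod.snd he⟩
  choose p hpM hp1 hp2 using hch
  refine ⟨fun i => (p i).1, fun j => (p (π⁻¹ j)).2, ?_, ?_, ?_⟩
  · intro i j hij
    exact Nat.lt_of_div_lt_div (by rw [hp1, hp1]; exact hr hij)
  · intro i j hij
    apply Nat.lt_of_div_lt_div
    rw [hp2, hp2, Equiv.Perm.apply_inv_self, Equiv.Perm.apply_inv_self]
    exact hc hij
  · intro i
    simpa [Equiv.Perm.inv_apply_self] using hpM i

lemma contract_bounded {M : Finset (ℕ × ℕ)} {n d : ℕ} (hd : 0 < d)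
    (h : M ⊆ range n ×ˢ range n) :
    contract d M ⊆ range ((n + d - 1) / d) ×ˢ range ((n + d - 1) / d) := by
  intro q hq
  simp only [contract, mem_image] at hq
  obtain ⟨p, hp, rfl⟩ := hq
  have hp' := h hp
  simp only [mem_product, mem_range] at hp' ⊢
  have key : ∀ x, x < n → x / d < (n + d - 1) / d := by
    intro x hx
    have hn : 1 ≤ n := Nat.one_le_of_lt (Nat.lt_of_le_of_lt (Nat.zero_le x) hx)
    have : n + d - 1 = (n - 1) + d := by omega
    rw [this, Nat.add_div_right _ hd]
    exact Nat.lt_succ_of_le (Nat.div_le_div_right (by omega))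
  exact ⟨key _ hp'.1, key _ hp'.2⟩


/-- the block of `M` at block-position `q`, with blocks of size `d × d`. -/
def block (M : Finset (ℕ × ℕ)) (d : ℕ) (q : ℕ × ℕ) : Finset (ℕ × ℕ) :=
  M.filter (fun p => p.1 / d = q.1 ∧ p.2 / d = q.2)

/-- In a fixed block-column `b`, at most `(k-1)·C(k²,k)` blocks are wide. -/
lemma wide_bound {k : ℕ} (hk : 1 ≤ k) (π : Equiv.Perm (Fin k)) (M : Finset (ℕ × ℕ))
    (hav : ¬ MContains π M) (b : ℕ) (s : ℕ) :
    ((range s).filter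
      (fun a => k ≤ ((block M (k^2) (a, b)).image Prod.snd).card)).card ≤
      (k - 1) * (k^2).choose k := by
  classical
  by_contra hcon
  push_neg at hcon
  set d := k^2 with hd
  set W := (range s).filter (fun a => k ≤ ((block M d (a, b)).image Prod.snd).card) with hW
  -- choose a k-subset of spanned columns for each wide block
  have choice : ∀ a, ∃ S : Finset ℕ, a ∈ W →
      S ⊆ (block M d (a, b)).image Prod.snd ∧ S.card = k := by
    intro a
    by_cases ha : a ∈ W
    · obtain ⟨S, hS1, hS2⟩ := exists_subset_card_eq (mem_filter.mp ha).2
      exact ⟨S, fun _ => ⟨hS1, hS2⟩⟩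
    · exact ⟨∅, fun h => absurd h ha⟩
  choose f hf using choice
  have hcols : ∀ a ∈ W, (block M d (a, b)).image Prod.snd ⊆ Ico (b * d) (b * d + d) := by
    intro a ha y hy
    obtain ⟨p, hp, rfl⟩ := mem_image.mp hy
    have h2 : p.2 / d = b := (mem_filter.mp hp).2.2
    have hdm : d * b + p.2 % d = p.2 := by rw [← h2]; exact Nat.div_add_mod p.2 d
    have hmod : p.2 % d < d := Nat.mod_lt _ (by positivity)
    have hbd : b * d = d * b := Nat.mul_comm _ _
    rw [mem_Ico]
    omega
  have hmaps : ∀ a ∈ W, f a ∈ (Ico (b * d) (b * d + d)).powersetCard k := by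
    intro a ha
    rw [mem_powersetCard]
    exact ⟨(hf a ha).1.trans (hcols a ha), (hf a ha).2⟩
  have hcard : ((Ico (b * d) (b * d + d)).powersetCard k).card * (k - 1) < W.card := by
    rw [card_powersetCard, Nat.card_Ico]
    calc ((b * d + d) - b * d).choose k * (k-1) = (k-1) * d.choose k := by
          rw [Nat.mul_comm]; congr 2; omega
      _ < W.card := hcon
  obtain ⟨S, hSmem, hSfib⟩ := exists_lt_card_fiber_of_mul_lt_card_of_maps_to hmaps hcard
  -- take k wide blocks sharing the column set S
  set F := W.filter (fun a => f a = S) with hF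
  obtain ⟨A, hAF, hAcard⟩ := exists_subset_card_eq (Nat.le_of_pred_lt hSfib)
  have hScard : S.card = k := (mem_powersetCard.mp hSmem).2
  -- the k blocks, in increasing order
  set ea := A.orderEmbOfFin hAcard with hea
  set ec := S.orderEmbOfFin hScard with hec
  have hSsub : ∀ i : Fin k, S ⊆ (block M d (ea i, b)).image Prod.snd := by
    intro i
    have hmemA : (ea i : ℕ) ∈ A := A.orderEmbOfFin_mem hAcard i
    have := mem_filter.mp (hAF hmemA)
    rw [← this.2]
    exact (hf _ this.1).1
  have pickpt : ∀ i : Fin k, ∃ p : ℕ × ℕ, p ∈ M ∧ p.1 / d = ea i ∧ p.2 = ec (π i) := by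
    intro i
    have : (ec (π i) : ℕ) ∈ (block M d (ea i, b)).image Prod.snd :=
      hSsub i (S.orderEmbOfFin_mem hScard (π i))
    obtain ⟨p, hp, hpe⟩ := mem_image.mp this
    exact ⟨p, (mem_filter.mp hp).1, (mem_filter.mp hp).2.1, hpe⟩
  choose p hpM hp1 hp2 using pickpt
  apply hav
  refine ⟨fun i => (p i).1, fun j => ec j, ?_, ?_, ?_⟩
  · intro i j hij
    apply Nat.lt_of_div_lt_div
    rw [hp1, hp1]
    exact_mod_cast (A.orderEmbOfFin hAcard).strictMono hij
  · intro i j hij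
    exact_mod_cast (S.orderEmbOfFin hScard).strictMono hij
  · intro i
    show ((p i).1, (ec (π i) : ℕ)) ∈ M
    rw [← hp2 i]
    exact hpM i

end MT

namespace MT2
open MT

lemma swap_contains {k : ℕ} {π : Equiv.Perm (Fin k)} {M : Finset (ℕ × ℕ)}
    (h : MContains π⁻¹ (M.image Prod.swap)) : MContains π M := by
  obtain ⟨r, c, hr, hc, hm⟩ := h
  refine ⟨c, r, hc, hr, fun j => ?_⟩
  have := hm (π j)
  rw [Equiv.Perm.inv_apply_self] at this
  obtain ⟨p, hp, he⟩ := mem_image.mp this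
  have : p = (c j, r (π j)) := by
    have := congrArg Prod.swap he
    rwa [Prod.swap_swap] at this
  rwa [this] at hp

lemma block_swap (M : Finset (ℕ × ℕ)) (d a b : ℕ) :
    (block (M.image Prod.swap) d (a, b)).image Prod.snd
      = (block M d (b, a)).image Prod.fst := by
  ext y
  simp only [mem_image, block, mem_filter]
  constructor
  · rintro ⟨p, ⟨hp, h1, h2⟩, rfl⟩
    obtain ⟨q, hq, rfl⟩ := hp
    exact ⟨q, ⟨hq, by simpa using h2, by simpa using h1⟩, rfl⟩
  · rintro ⟨q, ⟨hq, h1, h2⟩, rfl⟩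
    exact ⟨q.swap, ⟨⟨q, hq, rfl⟩, by simpa using h2, by simpa using h1⟩, rfl⟩

lemma tall_bound {k : ℕ} (hk : 1 ≤ k) (π : Equiv.Perm (Fin k)) (M : Finset (ℕ × ℕ))
    (hav : ¬ MContains π M) (a : ℕ) (s : ℕ) :
    ((range s).filter
      (fun b => k ≤ ((block M (k^2) (a, b)).image Prod.fst).card)).card ≤
      (k - 1) * (k^2).choose k := by
  have hav' : ¬ MContains π⁻¹ (M.image Prod.swap) := fun h => hav (swap_contains h)
  have := wide_bound hk π⁻¹ (M.image Prod.swap) hav' a s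
  simpa only [block_swap] using this

end MT2

namespace MT3
open MT MT2

/-- The Marcus–Tardos constant. -/
def C (k : ℕ) : ℕ := 2 * k^5 * (k^2).choose k + k^4 + k^2

theorem mt_main {k : ℕ} (hk : 2 ≤ k) :
    ∀ n (π : Equiv.Perm (Fin k)) (M : Finset (ℕ × ℕ)),
      M ⊆ range n ×ˢ range n → ¬ MContains π M → M.card ≤ C k * n := by
  intro n
  induction n using Nat.strong_induction_on with
  | _ n ih =>
  intro π M hMb hav
  have hk0 : 0 < k := by omega
  by_cases hsmall : n < k^4 + k^2
  · calc M.card ≤ (range n ×ˢ range n).card := card_le_card hMb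
      _ = n * n := by rw [card_product, card_range]
      _ ≤ (k^4 + k^2) * n := Nat.mul_le_mul_right n (by omega)
      _ ≤ C k * n := Nat.mul_le_mul_right n (by unfold C; omega)
  push_neg at hsmall
  set d := k^2 with hd
  have hd0 : 0 < d := by positivity
  have hd4 : 4 ≤ d := by have := Nat.mul_le_mul hk hk; rw [hd, pow_two]; omega
  set s := (n + d - 1) / d with hs
  have hsn : s < n := by
    rw [hs, Nat.div_lt_iff_lt_mul hd0]
    have h4 : 4 * n ≤ n * d := by
      calc 4 * n = n * 4 := Nat.mul_comm _ _
        _ ≤ n * d := Nat.mul_le_mul_left n hd4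
    have hdn : d ≤ n := by omega
    omega
  have hsd : s * d ≤ n + d - 1 := Nat.div_mul_le_self _ _
  set B := contract d M with hB
  have hBb : B ⊆ range s ×ˢ range s := contract_bounded hd0 hMb
  have hBav : ¬ MContains π B := fun h => hav (contract_contains h)
  have hBcard : B.card ≤ C k * s := ih s hsn π B hBb hBav
  -- fiber decomposition
  have hfib : M.card = ∑ q ∈ B, (block M d q).card := by
    rw [card_eq_sum_card_fiberwise (f := fun p => (p.1 / d, p.2 / d)) (t := B)
      (fun p hp => by exact mem_image_of_mem _ hp)]
    apply Finset.sum_congr rfl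
    intro q _
    congr 1
    apply filter_congr
    intro p _
    simp [block, Prod.ext_iff]
  -- bounds on single blocks
  have hsub : ∀ q, block M d q ⊆
      ((block M d q).image Prod.fst) ×ˢ ((block M d q).image Prod.snd) := by
    intro q p hp
    exact mem_product.mpr ⟨mem_image_of_mem _ hp, mem_image_of_mem _ hp⟩
  have hblk : ∀ q, (block M d q).card ≤
      ((block M d q).image Prod.fst).card * ((block M d q).image Prod.snd).card := by
    intro q
    calc (block M d q).card ≤ _ := card_le_card (hsub q)
      _ = _ := card_product _ _
  have hIco : ∀ q : ℕ × ℕ, ((block M d q).image Prod.fst).card ≤ d ∧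
      ((block M d q).image Prod.snd).card ≤ d := by
    intro q
    constructor
    · calc ((block M d q).image Prod.fst).card ≤ (Ico (q.1 * d) (q.1 * d + d)).card := by
            apply card_le_card
            intro x hx
            obtain ⟨p, hp, rfl⟩ := mem_image.mp hx
            have h1 : p.1 / d = q.1 := (mem_filter.mp hp).2.1
            have hdm : d * q.1 + p.1 % d = p.1 := by rw [← h1]; exact Nat.div_add_mod p.1 d
            have hmod : p.1 % d < d := Nat.mod_lt _ hd0
            have hbd : q.1 * d = d * q.1 := Nat.mul_comm _ _
            rw [mem_Ico]; omega
        _ = d := by rw [Nat.card_Ico]; omega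
    · calc ((block M d q).image Prod.snd).card ≤ (Ico (q.2 * d) (q.2 * d + d)).card := by
            apply card_le_card
            intro x hx
            obtain ⟨p, hp, rfl⟩ := mem_image.mp hx
            have h1 : p.2 / d = q.2 := (mem_filter.mp hp).2.2
            have hdm : d * q.2 + p.2 % d = p.2 := by rw [← h1]; exact Nat.div_add_mod p.2 d
            have hmod : p.2 % d < d := Nat.mod_lt _ hd0
            have hbd : q.2 * d = d * q.2 := Nat.mul_comm _ _
            rw [mem_Ico]; omega
        _ = d := by rw [Nat.card_Ico]; omega
  set wide : ℕ × ℕ → Prop := fun q => k ≤ ((block M d q).image Prod.snd).card with hwide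
  set tall : ℕ × ℕ → Prop := fun q => k ≤ ((block M d q).image Prod.fst).card with htall
  have hblk2 : ∀ q, (block M d q).card ≤
      (k-1)*(k-1) + (if wide q ∨ tall q then k^4 else 0) := by
    intro q
    by_cases hq : wide q ∨ tall q
    · rw [if_pos hq]
      calc (block M d q).card ≤ _ := hblk q
        _ ≤ d * d := Nat.mul_le_mul (hIco q).1 (hIco q).2
        _ = k^4 := by rw [hd]; ring
        _ ≤ (k-1)*(k-1) + k^4 := Nat.le_add_left _ _
    · rw [if_neg hq]
      push_neg at hq
      rw [hwide, htall] at hq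
      simp only [not_le] at hq
      calc (block M d q).card ≤ _ := hblk q
        _ ≤ (k-1)*(k-1) := Nat.mul_le_mul (by omega) (by omega)
  -- count wide and tall blocks
  classical
  have hWcount : (B.filter wide).card ≤ s * ((k - 1) * (k^2).choose k) := by
    rw [card_eq_sum_card_fiberwise (f := Prod.snd) (t := range s)
      (fun q hq => (mem_product.mp (hBb (mem_filter.mp hq).1)).2)]
    calc ∑ b ∈ range s, ((B.filter wide).filter (fun q => q.2 = b)).card
        ≤ ∑ b ∈ range s, (k - 1) * (k^2).choose k := by
          apply Finset.sum_le_sum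
          intro b _
          calc ((B.filter wide).filter (fun q => q.2 = b)).card
              ≤ ((range s).filter (fun a => k ≤ ((block M (k^2) (a, b)).image Prod.snd).card)).card := by
                apply card_le_card_of_injOn Prod.fst
                · intro q hq
                  simp only [Finset.mem_coe, mem_filter] at hq ⊢
                  obtain ⟨⟨hqB, hqw⟩, hqb⟩ := hq
                  refine ⟨(mem_product.mp (hBb hqB)).1, ?_⟩
                  rw [hwide] at hqw
                  have : q = (q.1, b) := by rw [← hqb]
                  rwa [← hd, ← this]
                · intro q1 h1 q2 h2 he
                  have hb1 : q1.2 = b := (mem_filter.mp h1).2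
                  have hb2 : q2.2 = b := (mem_filter.mp h2).2
                  exact Prod.ext he (hb1.trans hb2.symm)
            _ ≤ (k - 1) * (k^2).choose k := wide_bound (by omega) π M hav b s
      _ = s * ((k - 1) * (k^2).choose k) := by rw [Finset.sum_const, card_range, smul_eq_mul]
  have hTcount : (B.filter tall).card ≤ s * ((k - 1) * (k^2).choose k) := by
    rw [card_eq_sum_card_fiberwise (f := Prod.fst) (t := range s)
      (fun q hq => (mem_product.mp (hBb (mem_filter.mp hq).1)).1)]
    calc ∑ a ∈ range s, ((B.filter tall).filter (fun q => q.1 = a)).card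
        ≤ ∑ a ∈ range s, (k - 1) * (k^2).choose k := by
          apply Finset.sum_le_sum
          intro a _
          calc ((B.filter tall).filter (fun q => q.1 = a)).card
              ≤ ((range s).filter (fun b => k ≤ ((block M (k^2) (a, b)).image Prod.fst).card)).card := by
                apply card_le_card_of_injOn Prod.snd
                · intro q hq
                  simp only [Finset.mem_coe, mem_filter] at hq ⊢
                  obtain ⟨⟨hqB, hqw⟩, hqa⟩ := hq
                  refine ⟨(mem_product.mp (hBb hqB)).2, ?_⟩
                  rw [htall] at hqw
                  have : q = (a, q.2) := by rw [← hqa]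
                  rwa [← hd, ← this]
                · intro q1 h1 q2 h2 he
                  have hb1 : q1.1 = a := (mem_filter.mp h1).2
                  have hb2 : q2.1 = a := (mem_filter.mp h2).2
                  exact Prod.ext (hb1.trans hb2.symm) he
            _ ≤ (k - 1) * (k^2).choose k := tall_bound (by omega) π M hav a s
      _ = s * ((k - 1) * (k^2).choose k) := by rw [Finset.sum_const, card_range, smul_eq_mul]
  -- assemble
  set A := (k-1)*(k-1) with hA
  set X := (k - 1) * (k^2).choose k with hX
  have hsum : M.card ≤ A * B.card + k^4 * ((B.filter wide).card + (B.filter tall).card) := by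
    rw [hfib]
    calc ∑ q ∈ B, (block M d q).card
        ≤ ∑ q ∈ B, (A + (if wide q ∨ tall q then k^4 else 0)) :=
          Finset.sum_le_sum (fun q _ => hblk2 q)
      _ = A * B.card + ∑ q ∈ B, (if wide q ∨ tall q then k^4 else 0) := by
          rw [Finset.sum_add_distrib, Finset.sum_const, smul_eq_mul, Nat.mul_comm]
      _ ≤ A * B.card + k^4 * ((B.filter wide).card + (B.filter tall).card) := by
          apply Nat.add_le_add_left
          rw [← Finset.sum_filter]
          rw [Finset.sum_const, smul_eq_mul, Nat.mul_comm]
          apply Nat.mul_le_mul_left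
          calc (B.filter (fun q => wide q ∨ tall q)).card
              = ((B.filter wide) ∪ (B.filter tall)).card := by rw [← filter_or]
            _ ≤ _ := card_union_le _ _
  set c := C k with hc
  set E := A * c + k^4 * (2 * X) with hE
  have hMEs : M.card ≤ E * s := by
    calc M.card ≤ A * B.card + k^4 * ((B.filter wide).card + (B.filter tall).card) := hsum
      _ ≤ A * (c * s) + k^4 * (s * X + s * X) := by
          apply Nat.add_le_add
          · exact Nat.mul_le_mul_left A hBcard
          · exact Nat.mul_le_mul_left _ (Nat.add_le_add hWcount hTcount)
      _ = E * s := by rw [hE]; ring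
  -- key arithmetic facts
  have hD : k^4 * (2 * X) ≤ c := by
    have h1 : k^4 * (2 * X) = 2 * (k^4 * (k-1)) * (k^2).choose k := by rw [hX]; ring
    have h2 : k^4 * (k-1) ≤ k^5 := by
      calc k^4 * (k-1) ≤ k^4 * k := Nat.mul_le_mul_left _ (by omega)
        _ = k^5 := by ring
    calc k^4 * (2 * X) = 2 * (k^4 * (k-1)) * (k^2).choose k := h1
      _ ≤ 2 * k^5 * (k^2).choose k := by
          apply Nat.mul_le_mul_right
          omega
      _ ≤ c := by rw [hc]; unfold C; omega
  have hAd : A + 2 ≤ d := by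
    rw [hA, hd, pow_two]
    have h2 : k - 1 + 1 = k := by omega
    calc (k-1)*(k-1) + 2 ≤ (k-1)*(k-1) + (2*(k-1) + 1) :=
          Nat.add_le_add_left (by omega) _
      _ = ((k-1)+1) * ((k-1)+1) := by ring
      _ = k * k := by rw [h2]
  have hnd : d * d + d ≤ n := by
    have : d * d = k^4 := by rw [hd]; ring
    omega
  have hEnd : E * (n + d) ≤ c * n * d := by
    calc E * (n + d) = A * c * n + A * c * d + (k^4*(2*X)) * n + (k^4*(2*X)) * d := by
          rw [hE]; ring
      _ ≤ A * c * n + d * c * d + c * n + c * d := by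
          gcongr <;> omega
      _ = A * (c * n) + c * (d * d + d) + c * n := by ring
      _ ≤ A * (c * n) + c * n + c * n := by
          have : c * (d * d + d) ≤ c * n := Nat.mul_le_mul_left _ hnd
          omega
      _ = (A + 2) * (c * n) := by ring
      _ ≤ d * (c * n) := Nat.mul_le_mul_right _ hAd
      _ = c * n * d := by ring
  have : M.card * d ≤ c * n * d := by
    calc M.card * d ≤ (E * s) * d := Nat.mul_le_mul_right _ hMEs
      _ = E * (s * d) := by ring
      _ ≤ E * (n + d) := Nat.mul_le_mul_left _ (by omega)
      _ ≤ c * n * d := hEnd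
  exact Nat.le_of_mul_le_mul_right this hd0

end MT3

namespace SW
open MT MT3
open scoped Classical

noncomputable def avoidset {k : ℕ} (π : Equiv.Perm (Fin k)) (n : ℕ) : Finset (Finset (ℕ × ℕ)) :=
  ((range n ×ˢ range n).powerset).filter (fun M => ¬ MContains π M)

noncomputable def g {k : ℕ} (π : Equiv.Perm (Fin k)) (n : ℕ) : ℕ := (avoidset π n).card

lemma g_mono {k : ℕ} (π : Equiv.Perm (Fin k)) {m n : ℕ} (h : m ≤ n) : g π m ≤ g π n := by
  apply card_le_card
  intro M hM
  rw [avoidset, mem_filter, mem_powerset] at hM ⊢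
  exact ⟨hM.1.trans (product_subset_product (range_subset_range.mpr h) (range_subset_range.mpr h)), hM.2⟩

lemma klazar {k : ℕ} (hk : 2 ≤ k) (π : Equiv.Perm (Fin k)) (n : ℕ) :
    g π (2 * n) ≤ g π n * 16 ^ (C k * n) := by
  have hmaps : ∀ M ∈ avoidset π (2 * n), contract 2 M ∈ avoidset π n := by
    intro M hM
    rw [avoidset, mem_filter, mem_powerset] at hM ⊢
    constructor
    · have := contract_bounded (d := 2) (by norm_num) hM.1
      have h2 : (2 * n + 2 - 1) / 2 = n := by omega
      rwa [h2] at this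
    · exact fun h => hM.2 (contract_contains h)
  rw [g, card_eq_sum_card_fiberwise (f := contract 2) (t := avoidset π n) hmaps]
  calc ∑ B ∈ avoidset π n, ((avoidset π (2*n)).filter (fun M => contract 2 M = B)).card
      ≤ ∑ B ∈ avoidset π n, 16 ^ (C k * n) := by
        apply Finset.sum_le_sum
        intro B hB
        have hBmem := hB
        rw [avoidset, mem_filter, mem_powerset] at hBmem
        have hBcard : B.card ≤ C k * n := mt_main hk n π B hBmem.1 hBmem.2
        set expandB : Finset (ℕ × ℕ) := B.biUnion (fun q =>
          {(2*q.1, 2*q.2), (2*q.1, 2*q.2+1), (2*q.1+1, 2*q.2), (2*q.1+1, 2*q.2+1)}) with hexp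
        have hfsub : ∀ M ∈ (avoidset π (2*n)).filter (fun M => contract 2 M = B),
            M ∈ expandB.powerset := by
          intro M hM
          rw [mem_filter] at hM
          rw [mem_powerset]
          intro p hp
          have hpB : (p.1 / 2, p.2 / 2) ∈ B := by
            rw [← hM.2]
            exact mem_image_of_mem _ hp
          apply mem_biUnion.mpr
          refine ⟨(p.1 / 2, p.2 / 2), hpB, ?_⟩
          have h1 := Nat.div_add_mod p.1 2
          have h2 := Nat.div_add_mod p.2 2
          have m1 : p.1 % 2 < 2 := Nat.mod_lt _ (by norm_num)
          have m2 : p.2 % 2 < 2 := Nat.mod_lt _ (by norm_num)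
          simp only [mem_insert, mem_singleton, Prod.ext_iff]
          omega
        calc ((avoidset π (2*n)).filter (fun M => contract 2 M = B)).card
            ≤ expandB.powerset.card := card_le_card hfsub
          _ = 2 ^ expandB.card := card_powerset _
          _ ≤ 2 ^ (4 * B.card) := by
              apply Nat.pow_le_pow_right (by norm_num)
              calc expandB.card ≤ ∑ q ∈ B, ({(2*q.1, 2*q.2), (2*q.1, 2*q.2+1),
                    (2*q.1+1, 2*q.2), (2*q.1+1, 2*q.2+1)} : Finset (ℕ × ℕ)).card :=
                  card_biUnion_le
                _ ≤ ∑ q ∈ B, 4 := Finset.sum_le_sum (fun q _ => by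
                    apply le_trans (card_insert_le _ _)
                    apply Nat.succ_le_succ
                    apply le_trans (card_insert_le _ _)
                    apply Nat.succ_le_succ
                    apply le_trans (card_insert_le _ _)
                    apply Nat.succ_le_succ
                    simp)
                _ = 4 * B.card := by rw [Finset.sum_const, smul_eq_mul, Nat.mul_comm]
          _ = 16 ^ B.card := by rw [pow_mul]; norm_num
          _ ≤ 16 ^ (C k * n) := Nat.pow_le_pow_right (by norm_num) hBcard
    _ = g π n * 16 ^ (C k * n) := by rw [Finset.sum_const, smul_eq_mul]; rfl

lemma g_pow {k : ℕ} (hk : 2 ≤ k) (π : Equiv.Perm (Fin k)) (t : ℕ) :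
    g π (2 ^ t) ≤ 16 ^ (C k * 2 ^ t) := by
  induction t with
  | zero =>
    calc g π 1 ≤ (range 1 ×ˢ range 1).powerset.card := card_le_card (filter_subset _ _)
      _ = 2 := by rw [card_powerset, card_product, card_range]; norm_num
      _ ≤ 16 ^ (C k * 1) := by
          have : 1 ≤ C k := by unfold C; have : 1 ≤ k^2 := Nat.one_le_pow _ _ (by omega); omega
          calc (2:ℕ) ≤ 16 ^ 1 := by norm_num
            _ ≤ 16 ^ (C k * 1) := Nat.pow_le_pow_right (by norm_num) (by omega)
  | succ t ih =>
    calc g π (2 ^ (t+1)) = g π (2 * 2 ^ t) := by ring_nf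
      _ ≤ g π (2 ^ t) * 16 ^ (C k * 2 ^ t) := klazar hk π _
      _ ≤ 16 ^ (C k * 2 ^ t) * 16 ^ (C k * 2 ^ t) := Nat.mul_le_mul_right _ ih
      _ = 16 ^ (C k * 2 ^ (t+1)) := by rw [← pow_add]; ring_nf

end SW

namespace SW2
open MT MT3 SW
open scoped Classical

noncomputable def graphF {m : ℕ} (σ : Equiv.Perm (Fin m)) : Finset (ℕ × ℕ) :=
  Finset.image (fun i : Fin m => ((i : ℕ), (σ i : ℕ))) univ

lemma sm_le_g {k m : ℕ} (π : Equiv.Perm (Fin k)) : Sm m π ≤ g π m := by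
  rw [Sm, Set.ncard_eq_toFinset_card']
  apply card_le_card_of_injOn graphF
  · intro σ hσ
    rw [Finset.mem_coe, Set.mem_toFinset] at hσ
    rw [Finset.mem_coe, avoidset, mem_filter, mem_powerset]
    constructor
    · intro p hp
      obtain ⟨i, _, rfl⟩ := mem_image.mp hp
      exact mem_product.mpr ⟨mem_range.mpr i.isLt, mem_range.mpr (σ i).isLt⟩
    · rintro ⟨r, c, hr, hc, hm⟩
      apply hσ
      have hch : ∀ i : Fin k, ∃ j : Fin m, (j : ℕ) = r i ∧ ((σ j : ℕ)) = c (π i) := by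
        intro i
        obtain ⟨j, _, he⟩ := mem_image.mp (hm i)
        exact ⟨j, congrArg Prod.fst he, congrArg Prod.snd he⟩
      choose j hj1 hj2 using hch
      refine ⟨fun l => σ (j (π⁻¹ l)), j, ?_, ?_, ?_⟩
      · intro l l' hll
        rw [Fin.lt_def]
        have e1 : ((σ (j (π⁻¹ l)) : ℕ)) = c l := by
          rw [hj2 (π⁻¹ l), Equiv.Perm.apply_inv_self]
        have e2 : ((σ (j (π⁻¹ l')) : ℕ)) = c l' := by
          rw [hj2 (π⁻¹ l'), Equiv.Perm.apply_inv_self]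
        rw [e1, e2]
        exact hc hll
      · intro l l' hll
        rw [Fin.lt_def, hj1 l, hj1 l']
        exact hr hll
      · intro i
        simp only [Equiv.Perm.inv_apply_self]
  · intro σ1 h1 σ2 h2 he
    ext i
    have : ((i : ℕ), (σ1 i : ℕ)) ∈ graphF σ2 := by
      rw [← he]
      exact mem_image_of_mem _ (mem_univ i)
    obtain ⟨j, _, hj⟩ := mem_image.mp this
    have hj1 : (j : ℕ) = (i : ℕ) := congrArg Prod.fst hj
    have hj2 : (σ2 j : ℕ) = (σ1 i : ℕ) := congrArg Prod.snd hj
    rw [show j = i from Fin.ext hj1] at hj2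
    exact hj2.symm

theorem sm_bound {k : ℕ} (hk : 2 ≤ k) (π : Equiv.Perm (Fin k)) (m : ℕ) :
    Sm m π ≤ (16 ^ (2 * C k)) ^ m := by
  rcases Nat.eq_zero_or_pos m with rfl | hm
  · rw [pow_zero, Sm]
    calc ({σ : Equiv.Perm (Fin 0) | ¬ PatternContains σ π}).ncard
        ≤ (Set.univ : Set (Equiv.Perm (Fin 0))).ncard :=
          Set.ncard_le_ncard (Set.subset_univ _) Set.finite_univ
      _ = Nat.card (Equiv.Perm (Fin 0)) := Set.ncard_univ _
      _ = 1 := by simp [Nat.card_eq_fintype_card]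
  · set t := Nat.log 2 m + 1 with ht
    have h1 : m ≤ 2 ^ t := le_of_lt (Nat.lt_pow_succ_log_self (by norm_num) m)
    have h2 : 2 ^ t ≤ 2 * m := by
      rw [ht, pow_succ, Nat.mul_comm]
      exact Nat.mul_le_mul_left 2 (Nat.pow_log_le_self 2 (by omega))
    calc Sm m π ≤ g π m := sm_le_g π
      _ ≤ g π (2 ^ t) := g_mono π h1
      _ ≤ 16 ^ (C k * 2 ^ t) := g_pow hk π t
      _ ≤ 16 ^ (C k * (2 * m)) := Nat.pow_le_pow_right (by norm_num)
          (Nat.mul_le_mul_left _ h2)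
      _ = (16 ^ (2 * C k)) ^ m := by rw [← pow_mul]; ring_nf

end SW2

end MTSW

namespace ElectionProof
open MTSW

lemma key_lemma {k m n' : ℕ} (π T₁ T₂ : Equiv.Perm (Fin k))
    (hπ : T₂ * T₁⁻¹ = π) (P : Fin (n' + 1) → Equiv.Perm (Fin m)) (i : Fin n')
    (hcont : PatternContains (P i.succ * (P 0)⁻¹) π) :
    ElectionContains ⟨n' + 1, m, P⟩ ⟨2, k, ![T₁, T₂]⟩ := by
  obtain ⟨μ, ρ, hμ, hρ, hcomm⟩ := hcont
  refine ⟨![0, i.succ], fun x => (P 0)⁻¹ (ρ (T₁ x)), ?_, ?_, ?_⟩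
  · intro a b hab
    fin_cases a <;> fin_cases b <;> simp_all
    · exact (Fin.succ_ne_zero i hab.symm).elim
  · intro x y h
    exact T₁.injective (hρ.injective ((P 0)⁻¹.injective h))
  · intro v x y hxy
    fin_cases v
    · simp only [Matrix.cons_val_zero] at hxy ⊢
      show P 0 ((P 0)⁻¹ (ρ (T₁ x))) < P 0 ((P 0)⁻¹ (ρ (T₁ y)))
      rw [Equiv.Perm.apply_inv_self, Equiv.Perm.apply_inv_self]
      exact hρ hxy
    · simp only [Matrix.cons_val_one, Matrix.head_cons] at hxy ⊢
      have e : ∀ z, P i.succ ((P 0)⁻¹ (ρ (T₁ z))) = μ (T₂ z) := by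
        intro z
        have h1 : (P i.succ * (P 0)⁻¹) (ρ (T₁ z)) = μ (π (T₁ z)) := hcomm (T₁ z)
        have h2 : π (T₁ z) = T₂ z := by
          rw [← hπ]
          simp [Equiv.Perm.mul_apply]
        simpa [Equiv.Perm.mul_apply, h2] using h1
      show P i.succ ((P 0)⁻¹ (ρ (T₁ x))) < P i.succ ((P 0)⁻¹ (ρ (T₁ y)))
      rw [e x, e y]
      exact hμ hxy

lemma count_lemma {k m : ℕ} (π : Equiv.Perm (Fin k)) (n : ℕ)
    (Γ : Set Election) (T₁ T₂ : Equiv.Perm (Fin k))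
    (hπ : T₂ * T₁⁻¹ = π) (hmem : (⟨2, k, ![T₁, T₂]⟩ : Election) ∈ Γ) :
    {P : Fin n → Equiv.Perm (Fin m) |
        ∀ γ ∈ Γ, ¬ ElectionContains ⟨n, m, P⟩ γ}.ncard ≤
      Nat.factorial m * (Sm m π) ^ (n - 1) := by
  classical
  cases n with
  | zero =>
    calc {P : Fin 0 → Equiv.Perm (Fin m) |
          ∀ γ ∈ Γ, ¬ ElectionContains ⟨0, m, P⟩ γ}.ncard
        ≤ (Set.univ : Set (Fin 0 → Equiv.Perm (Fin m))).ncard :=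
          Set.ncard_le_ncard (Set.subset_univ _) Set.finite_univ
      _ = 1 := by rw [Set.ncard_univ]; simp [Nat.card_eq_fintype_card]
      _ ≤ Nat.factorial m * (Sm m π) ^ (0 - 1) := by
          simp only [Nat.zero_sub, pow_zero, mul_one]
          exact Nat.one_le_iff_ne_zero.mpr (Nat.factorial_ne_zero m)
  | succ n' =>
    set S : Set (Fin (n' + 1) → Equiv.Perm (Fin m)) :=
      {P | ∀ γ ∈ Γ, ¬ ElectionContains ⟨n' + 1, m, P⟩ γ} with hS
    have key : ∀ P ∈ S, ∀ i : Fin n', ¬ PatternContains (P i.succ * (P 0)⁻¹) π := by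
      intro P hP i hcont
      exact hP _ hmem (key_lemma π T₁ T₂ hπ P i hcont)
    have hF : Function.Injective (fun P : S =>
        ((P.1 0, fun i : Fin n' => (⟨P.1 i.succ * (P.1 0)⁻¹, key P.1 P.2 i⟩ :
          {σ : Equiv.Perm (Fin m) // ¬ PatternContains σ π})) :
          Equiv.Perm (Fin m) × (Fin n' → {σ : Equiv.Perm (Fin m) // ¬ PatternContains σ π}))) := by
      intro P Q h
      have h0 : P.1 0 = Q.1 0 := congrArg Prod.fst h
      have h1 : ∀ i : Fin n', P.1 i.succ * (P.1 0)⁻¹ = Q.1 i.succ * (Q.1 0)⁻¹ :=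
        fun i => Subtype.ext_iff.mp (congrFun (congrArg Prod.snd h) i)
      apply Subtype.ext
      funext j
      refine Fin.cases ?_ ?_ j
      · exact h0
      · intro i
        have hi := h1 i
        rw [h0] at hi
        exact mul_right_cancel hi
    have hSm : Nat.card {σ : Equiv.Perm (Fin m) // ¬ PatternContains σ π} = Sm m π := by
      rw [Sm, ← Nat.card_coe_set_eq]
      exact Nat.card_congr (Equiv.subtypeEquivRight (fun σ => by simp [Set.mem_setOf_eq]))
    calc S.ncard = Nat.card S := (Nat.card_coe_set_eq S).symm
      _ ≤ Nat.card (Equiv.Perm (Fin m) ×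
            (Fin n' → {σ : Equiv.Perm (Fin m) // ¬ PatternContains σ π})) :=
          Nat.card_le_card_of_injective _ hF
      _ = Nat.factorial m * (Sm m π) ^ (n' + 1 - 1) := by
          rw [Nat.card_prod, Nat.card_fun, hSm]
          simp [Nat.card_eq_fintype_card, Fintype.card_perm]

end ElectionProof

/-- For every pattern `π` of length `k ≥ 2` there is a constant `c` (Marcus–Tardos)
such that for every set of configurations `Γ` containing a `(2,k)`-configuration
`(T₁,T₂)` with associated permutation `π = p(T₁,T₂) = T₂ ∘ T₁⁻¹`, the number
`a(n,m,Γ)` of `(n,m)`-elections avoiding all configurations in `Γ` satisfies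
`a(n,m,Γ) ≤ m!·S_m(π)^{n-1}`, with `S_m(π) ≤ c^m`, and hence
`a(n,m,Γ) ≤ m!·c^{(n-1)m}`. -/
theorem avoiding_elections_bound (k : ℕ) (hk : 2 ≤ k) (π : Equiv.Perm (Fin k)) :
    ∃ c : ℕ, ∀ (n m : ℕ) (Γ : Set Election) (T₁ T₂ : Equiv.Perm (Fin k)),
      T₂ * T₁⁻¹ = π → (⟨2, k, ![T₁, T₂]⟩ : Election) ∈ Γ →
      {P : Fin n → Equiv.Perm (Fin m) |
          ∀ γ ∈ Γ, ¬ ElectionContains ⟨n, m, P⟩ γ}.ncard ≤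
        Nat.factorial m * (Sm m π) ^ (n - 1) ∧
      Sm m π ≤ c ^ m ∧
      {P : Fin n → Equiv.Perm (Fin m) |
          ∀ γ ∈ Γ, ¬ ElectionContains ⟨n, m, P⟩ γ}.ncard ≤
        Nat.factorial m * c ^ ((n - 1) * m) := by
  refine ⟨16 ^ (2 * MTSW.MT3.C k), ?_⟩
  intro n m Γ T₁ T₂ hπ hmem
  have hsm : Sm m π ≤ (16 ^ (2 * MTSW.MT3.C k)) ^ m := MTSW.SW2.sm_bound hk π m
  have hmain := ElectionProof.count_lemma (m := m) π n Γ T₁ T₂ hπ hmem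
  refine ⟨hmain, hsm, ?_⟩
  calc {P : Fin n → Equiv.Perm (Fin m) |
        ∀ γ ∈ Γ, ¬ ElectionContains ⟨n, m, P⟩ γ}.ncard
      ≤ Nat.factorial m * (Sm m π) ^ (n - 1) := hmain
    _ ≤ Nat.factorial m * ((16 ^ (2 * MTSW.MT3.C k)) ^ m) ^ (n - 1) :=
        Nat.mul_le_mul_left _ (Nat.pow_le_pow_left hsm _)
    _ = Nat.factorial m * (16 ^ (2 * MTSW.MT3.C k)) ^ ((n - 1) * m) := by
        rw [← pow_mul, Nat.mul_comm m (n - 1)]
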